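/- Let G = ⟨a, b | a^{b²} = a·a^{3b}⟩ and let N be the normal closure of [a, a^b] in G. Then the quotient G/N is isomorphic to the semidirect product ℤ² ⋊ ℤ in which the generator of ℤ acts on ℤ² by the matrix U = !![0,1;1,3]; equivalently, the two-relator group ⟨a, b | a^{b²} = a·a^{3b}, [a, a^b] = 1⟩ is isomorphic to ℤ² ⋊_U ℤ. -/

import Mathlib

namespace OneRelatorLCS

/-- The relator `(b⁻²ab²)⁻¹ · a · (b⁻¹a³b)` in the free group on `a = of 0`, `b = of 1`,
expressing the relation `a^{b²} = a·a^{3b}` (with `x^y = y⁻¹xy`). -/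
def rel : FreeGroup (Fin 2) :=
  ((FreeGroup.of 1)⁻¹ * (FreeGroup.of 1)⁻¹ * FreeGroup.of 0 * FreeGroup.of 1 * FreeGroup.of 1)⁻¹ *
    FreeGroup.of 0 *
    ((FreeGroup.of 1)⁻¹ * (FreeGroup.of 0) ^ 3 * FreeGroup.of 1)

/-- The one-relator group `G = ⟨a, b | a^{b²} = a·a^{3b}⟩`. -/
abbrev G : Type := PresentedGroup ({rel} : Set (FreeGroup (Fin 2)))

def a : G := PresentedGroup.of 0
def b : G := PresentedGroup.of 1

/-- `[x,y] = x⁻¹y⁻¹xy`. -/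
def cmt {H : Type*} [Group H] (x y : H) : H := x⁻¹ * y⁻¹ * x * y

/-- The matrix `U = !![0,1;1,3] ∈ GL₂(ℤ)`. -/
def U : Matrix (Fin 2) (Fin 2) ℤ := !![0, 1; 1, 3]

/-- The automorphism of `ℤ²` given by the matrix `U` (its inverse is given by
`U⁻¹ = !![-3,1;1,0]`, since `det U = -1`). -/
def Uaut : (Fin 2 → ℤ) ≃+ (Fin 2 → ℤ) where
  toFun v := U.mulVec v
  invFun v := (!![-3, 1; 1, 0] : Matrix (Fin 2) (Fin 2) ℤ).mulVec v
  left_inv v := by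
    show (!![-3, 1; 1, 0] : Matrix (Fin 2) (Fin 2) ℤ).mulVec (U.mulVec v) = v
    rw [Matrix.mulVec_mulVec,
      show (!![-3, 1; 1, 0] : Matrix (Fin 2) (Fin 2) ℤ) * U = 1 by decide,
      Matrix.one_mulVec]
  right_inv v := by
    show U.mulVec ((!![-3, 1; 1, 0] : Matrix (Fin 2) (Fin 2) ℤ).mulVec v) = v
    rw [Matrix.mulVec_mulVec,
      show U * (!![-3, 1; 1, 0] : Matrix (Fin 2) (Fin 2) ℤ) = 1 by decide,
      Matrix.one_mulVec]
  map_add' v w := Matrix.mulVec_add U v w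

/-- The action of `ℤ` on `ℤ²` in which `1 ∈ ℤ` acts by the matrix `U`. -/
def phi : Multiplicative ℤ →* MulAut (Multiplicative (Fin 2 → ℤ)) :=
  zpowersHom _ (AddEquiv.toMultiplicative Uaut)

/-- The semidirect product `ℤ² ⋊_U ℤ` where the generator of `ℤ` acts by `U`. -/
abbrev ZUZ : Type := SemidirectProduct (Multiplicative (Fin 2 → ℤ)) (Multiplicative ℤ) phi

/-! ### auxiliary -/

open SemidirectProduct

-- generator t of the ℤ factor
def t : ZUZ := inr (Multiplicative.ofAdd (1 : ℤ))

lemma phi_ofAdd_one (v : Fin 2 → ℤ) :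
    phi (Multiplicative.ofAdd 1) (Multiplicative.ofAdd v) = Multiplicative.ofAdd (U.mulVec v) := by
  simp [phi, zpowersHom_apply, Uaut]

lemma conj_t (v : Fin 2 → ℤ) :
    t * inl (Multiplicative.ofAdd v) * t⁻¹ = inl (Multiplicative.ofAdd (U.mulVec v)) := by
  rw [← phi_ofAdd_one, inl_aut]; rfl


/-- images of generators in ZUZ: a ↦ inl e₀, b ↦ t⁻¹. -/
def fgen : Fin 2 → ZUZ := ![inl (Multiplicative.ofAdd ![1,0]), t⁻¹]

lemma mulVec_e0 : U.mulVec ![1,0] = ![0,1] := by decide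
lemma mulVec_e1 : U.mulVec ![0,1] = ![1,3] := by decide
lemma mulVec_3e0 : U.mulVec ![3,0] = ![0,3] := by decide

lemma hrel : ∀ r ∈ ({rel} : Set (FreeGroup (Fin 2))), FreeGroup.lift fgen r = 1 := by
  rintro r rfl
  have h0 : FreeGroup.lift fgen (FreeGroup.of 0) = inl (Multiplicative.ofAdd ![1,0]) := by
    simp [fgen]
  have h1 : FreeGroup.lift fgen (FreeGroup.of 1) = t⁻¹ := by simp [fgen]
  rw [rel]
  simp only [map_mul, map_inv, map_pow, h0, h1, inv_inv, mul_inv_rev]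
  have e1 : t * (inl (Multiplicative.ofAdd ![1,0]) : ZUZ) * t⁻¹ = inl (Multiplicative.ofAdd ![0,1]) := by
    rw [conj_t, mulVec_e0]
  have e2 : t * (inl (Multiplicative.ofAdd ![0,1]) : ZUZ) * t⁻¹ = inl (Multiplicative.ofAdd ![1,3]) := by
    rw [conj_t, mulVec_e1]
  have e3 : t * (inl (Multiplicative.ofAdd ![3,0]) : ZUZ) * t⁻¹ = inl (Multiplicative.ofAdd ![0,3]) := by
    rw [conj_t, mulVec_3e0]
  have hcube : (inl (Multiplicative.ofAdd ![1,0]) : ZUZ) ^ 3 = inl (Multiplicative.ofAdd ![3,0]) := by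
    rw [← map_pow]
    congr 1
    rw [← ofAdd_nsmul]
    congr 1
    decide
  -- goal: t * t * X * t⁻¹ * t⁻¹ ... rearranged
  have key : t * (t * (inl (Multiplicative.ofAdd ![1,0]) : ZUZ) * t⁻¹) * t⁻¹ =
      inl (Multiplicative.ofAdd ![1,0]) * (t * (inl (Multiplicative.ofAdd ![1,0]) : ZUZ)^3 * t⁻¹) := by
    rw [e1, e2, hcube, e3, ← map_mul]
    congr 1
    rw [← ofAdd_add]
    congr 1
    decide
  group
  group at key
  calc t * t * inl (Multiplicative.ofAdd ![1,0]) ^ (-1 : ℤ) * t ^ (-2 : ℤ) *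
        inl (Multiplicative.ofAdd ![1,0]) * t * inl (Multiplicative.ofAdd ![1,0]) ^ 3 * t ^ (-1 : ℤ)
      = t * t * inl (Multiplicative.ofAdd ![1,0]) ^ (-1 : ℤ) * t ^ (-2 : ℤ) *
        (t * t * inl (Multiplicative.ofAdd ![1,0]) * t ^ (-2 : ℤ)) := by rw [key]; group
    _ = 1 := by group


/-- the hom G →* ZUZ -/
def F : G →* ZUZ := PresentedGroup.toGroup hrel

lemma F_a : F a = inl (Multiplicative.ofAdd ![1,0]) := by
  simp [F, a, PresentedGroup.toGroup.of, fgen]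

lemma F_b : F b = t⁻¹ := by
  simp [F, b, PresentedGroup.toGroup.of, fgen]

-- the quotient
abbrev N : Subgroup G := Subgroup.normalClosure {cmt a (b⁻¹ * a * b)}
abbrev Q : Type := G ⧸ N

def pi : G →* Q := QuotientGroup.mk' N

def x : Q := pi a
def y : Q := pi (b⁻¹ * a * b)
def beta : Q := pi b

lemma hcomm : Commute x y := by
  have h : pi (cmt a (b⁻¹ * a * b)) = 1 := by
    apply (QuotientGroup.eq_one_iff _).mpr
    exact Subgroup.subset_normalClosure rfl
  have h2 : x⁻¹ * y⁻¹ * x * y = 1 := by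
    simpa [cmt, x, y, map_mul, map_inv] using h
  show x * y = y * x
  calc x * y = y * x * (x⁻¹ * y⁻¹ * x * y) := by group
    _ = y * x * 1 := by rw [h2]
    _ = y * x := mul_one _

lemma mk_rel_eq (S : Set (FreeGroup (Fin 2))) :
    (PresentedGroup.mk S) rel =
      ((PresentedGroup.mk S (FreeGroup.of 1))⁻¹ * (PresentedGroup.mk S (FreeGroup.of 1))⁻¹ *
          PresentedGroup.mk S (FreeGroup.of 0) * PresentedGroup.mk S (FreeGroup.of 1) *
          PresentedGroup.mk S (FreeGroup.of 1))⁻¹ *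
        PresentedGroup.mk S (FreeGroup.of 0) *
        ((PresentedGroup.mk S (FreeGroup.of 1))⁻¹ * (PresentedGroup.mk S (FreeGroup.of 0)) ^ 3 *
          PresentedGroup.mk S (FreeGroup.of 1)) := by
  simp only [rel, map_mul, map_inv, map_pow]

lemma relG : b⁻¹ * (b⁻¹ * a * b) * b = a * (b⁻¹ * a * b)^3 := by
  have h : (PresentedGroup.mk ({rel} : Set (FreeGroup (Fin 2)))) rel = 1 := by
    apply (QuotientGroup.eq_one_iff _).mpr
    exact Subgroup.subset_normalClosure rfl
  rw [mk_rel_eq] at h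
  have h1 : (b⁻¹ * b⁻¹ * a * b * b)⁻¹ * (a * (b⁻¹ * a^3 * b)) = 1 := by
    calc (b⁻¹ * b⁻¹ * a * b * b)⁻¹ * (a * (b⁻¹ * a^3 * b))
        = (b⁻¹ * b⁻¹ * a * b * b)⁻¹ * a * (b⁻¹ * a^3 * b) := by group
      _ = 1 := h
  rw [inv_mul_eq_one] at h1
  have h3 : (b⁻¹ * a * b)^3 = b⁻¹ * a^3 * b := by
    simp [pow_succ, mul_assoc]
  calc b⁻¹ * (b⁻¹ * a * b) * b = b⁻¹ * b⁻¹ * a * b * b := by group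
    _ = a * (b⁻¹ * a^3 * b) := h1
    _ = a * (b⁻¹ * a * b)^3 := by rw [h3]

lemma hrelQ : beta⁻¹ * y * beta = x * y^3 := by
  have := congrArg pi relG
  simpa [beta, y, x, map_mul, map_inv, map_pow] using this


def f1 : Multiplicative (Fin 2 → ℤ) →* Q where
  toFun v := x ^ (Multiplicative.toAdd v 0) * y ^ (Multiplicative.toAdd v 1)
  map_one' := by simp
  map_mul' v w := by
    have hc := hcomm.zpow_zpow (Multiplicative.toAdd w 0) (Multiplicative.toAdd v 1)
    show x ^ (Multiplicative.toAdd (v * w) 0) * y ^ (Multiplicative.toAdd (v * w) 1) = _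
    have hvw : Multiplicative.toAdd (v * w) = Multiplicative.toAdd v + Multiplicative.toAdd w := rfl
    rw [hvw, Pi.add_apply, Pi.add_apply, zpow_add, zpow_add]
    exact hc.mul_mul_mul_comm _ _

lemma f1_apply (v : Fin 2 → ℤ) : f1 (Multiplicative.ofAdd v) = x ^ (v 0) * y ^ (v 1) := rfl

def f2 : Multiplicative ℤ →* Q := zpowersHom Q beta⁻¹

lemma f2_apply (n : ℤ) : f2 (Multiplicative.ofAdd n) = beta⁻¹ ^ n := rfl

-- base case of compatibility
lemma compat_one (v : Fin 2 → ℤ) :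
    f1 (Multiplicative.ofAdd (U.mulVec v)) = beta⁻¹ * f1 (Multiplicative.ofAdd v) * beta := by
  have hU0 : U.mulVec v 0 = v 1 := by
    simp [U, Matrix.mulVec, dotProduct, Fin.sum_univ_two]
  have hU1 : U.mulVec v 1 = v 0 + 3 * v 1 := by
    simp [U, Matrix.mulVec, dotProduct, Fin.sum_univ_two]
  rw [f1_apply, f1_apply, hU0, hU1]
  have hxb : beta⁻¹ * x * beta = y := by
    simp [x, y, beta, map_mul, map_inv, mul_assoc]
  have hyb : beta⁻¹ * y * beta = x * y ^ 3 := hrelQ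
  have key : beta⁻¹ * (x ^ (v 0) * y ^ (v 1)) * beta
      = (beta⁻¹ * x * beta) ^ (v 0) * (beta⁻¹ * y * beta) ^ (v 1) := by
    have cz : ∀ (h : Q) (n : ℤ), (beta⁻¹ * h * beta) ^ n = beta⁻¹ * h ^ n * beta := by
      intro h n
      rw [show beta⁻¹ * h * beta = beta⁻¹ * h * beta⁻¹⁻¹ by rw [inv_inv], conj_zpow, inv_inv]
    rw [cz, cz]; group
  rw [key, hxb, hyb]
  have hc3 : Commute x (y ^ 3) := hcomm.pow_right 3
  have h3 : (y ^ (3 : ℕ)) ^ (v 1) = y ^ (3 * v 1) := by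
    rw [← zpow_natCast y 3, ← zpow_mul]; norm_num
  have hcc := (hcomm.zpow_zpow (v 1) (v 0)).eq
  rw [hc3.mul_zpow, h3]
  calc x ^ (v 1) * y ^ (v 0 + 3 * v 1)
      = x ^ (v 1) * y ^ (v 0) * y ^ (3 * v 1) := by rw [zpow_add, ← mul_assoc]
    _ = y ^ (v 0) * x ^ (v 1) * y ^ (3 * v 1) := by rw [hcc]
    _ = y ^ (v 0) * (x ^ (v 1) * y ^ (3 * v 1)) := by rw [mul_assoc]


def e : Multiplicative (Fin 2 → ℤ) ≃* Multiplicative (Fin 2 → ℤ) := AddEquiv.toMultiplicative Uaut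

lemma e_apply (v : Multiplicative (Fin 2 → ℤ)) :
    e v = Multiplicative.ofAdd (U.mulVec (Multiplicative.toAdd v)) := rfl

lemma f1_e (v : Multiplicative (Fin 2 → ℤ)) : f1 (e v) = beta⁻¹ * f1 v * beta := by
  rw [e_apply]
  exact compat_one (Multiplicative.toAdd v)

lemma f1_einv (v : Multiplicative (Fin 2 → ℤ)) : f1 (e⁻¹ v) = beta * f1 v * beta⁻¹ := by
  have h := f1_e (e⁻¹ v)
  rw [MulAut.apply_inv_self (M := Multiplicative (Fin 2 → ℤ)) e v] at h
  rw [h]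
  group

lemma compat_n : ∀ (n : ℤ) (v : Multiplicative (Fin 2 → ℤ)),
    f1 ((e ^ n) v) = beta⁻¹ ^ n * f1 v * (beta⁻¹ ^ n)⁻¹ := by
  intro n
  induction n using Int.induction_on with
  | zero => intro v; simp
  | succ k ih =>
    intro v
    have h1 : (e ^ ((k : ℤ) + 1)) v = (e ^ (k : ℤ)) (e v) := by rw [zpow_add_one]; rfl
    rw [h1, ih, f1_e]
    group
  | pred k ih =>
    intro v
    have h1 : (e ^ (-(k : ℤ) - 1)) v = (e ^ (-(k : ℤ))) (e⁻¹ v) := by rw [zpow_sub_one]; rfl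
    rw [h1, ih, f1_einv]
    group

lemma compat : ∀ g : Multiplicative ℤ,
    f1.comp (phi g).toMonoidHom = (MulAut.conj (f2 g)).toMonoidHom.comp f1 := by
  intro g
  refine MonoidHom.ext fun v => ?_
  simp only [MonoidHom.comp_apply, MulEquiv.coe_toMonoidHom, MulAut.conj_apply]
  have hphi : phi g = e ^ (Multiplicative.toAdd g) := rfl
  have hf2 : f2 g = beta⁻¹ ^ (Multiplicative.toAdd g) := rfl
  rw [hphi, hf2]
  exact compat_n (Multiplicative.toAdd g) v


def g0 : ZUZ →* Q := SemidirectProduct.lift f1 f2 compat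

lemma F_y : F (b⁻¹ * a * b) = inl (Multiplicative.ofAdd ![0,1]) := by
  simp only [map_mul, map_inv, F_a, F_b, inv_inv]
  rw [conj_t, mulVec_e0]

lemma ker_le : (N : Subgroup G) ≤ F.ker := by
  apply Subgroup.normalClosure_le_normal
  rintro z hz
  rw [Set.mem_singleton_iff] at hz
  subst hz
  rw [SetLike.mem_coe, MonoidHom.mem_ker, cmt, map_mul, map_mul, map_mul, map_inv, map_inv,
    F_a, F_y]
  have hcomm2 : (inl (Multiplicative.ofAdd ![1,0]) : ZUZ) * inl (Multiplicative.ofAdd ![0,1])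
      = inl (Multiplicative.ofAdd ![0,1]) * inl (Multiplicative.ofAdd ![1,0]) := by
    calc (inl (Multiplicative.ofAdd ![1,0]) : ZUZ) * inl (Multiplicative.ofAdd ![0,1])
        = inl (Multiplicative.ofAdd ![1,0] * Multiplicative.ofAdd ![0,1]) :=
          (map_mul SemidirectProduct.inl _ _).symm
      _ = inl (Multiplicative.ofAdd ![0,1] * Multiplicative.ofAdd ![1,0]) := by rw [mul_comm]
      _ = inl (Multiplicative.ofAdd ![0,1]) * inl (Multiplicative.ofAdd ![1,0]) :=
          map_mul SemidirectProduct.inl _ _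
  rw [show ((inl (Multiplicative.ofAdd ![1,0]) : ZUZ))⁻¹ * (inl (Multiplicative.ofAdd ![0,1]))⁻¹ *
      inl (Multiplicative.ofAdd ![1,0]) * inl (Multiplicative.ofAdd ![0,1])
      = (inl (Multiplicative.ofAdd ![1,0]) : ZUZ)⁻¹ * (inl (Multiplicative.ofAdd ![0,1]))⁻¹ *
      (inl (Multiplicative.ofAdd ![1,0]) * inl (Multiplicative.ofAdd ![0,1])) by group, hcomm2]
  group

def fQ : Q →* ZUZ := QuotientGroup.lift N F fun z hz => MonoidHom.mem_ker.mp (ker_le hz)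

lemma fQ_pi (g : G) : fQ (pi g) = F g := rfl

lemma gf : g0.comp fQ = MonoidHom.id Q := by
  apply QuotientGroup.monoidHom_ext
  apply PresentedGroup.ext
  intro i
  fin_cases i
  · show g0 (fQ (pi a)) = pi a
    rw [fQ_pi, F_a]
    simp only [g0, SemidirectProduct.lift_inl]
    have : f1 (Multiplicative.ofAdd ![1,0]) = x := by
      rw [f1_apply]; norm_num
    rw [this]; rfl
  · show g0 (fQ (pi b)) = pi b
    rw [fQ_pi, F_b, map_inv, t]
    simp only [g0, SemidirectProduct.lift_inr]
    show ((beta⁻¹) ^ (1 : ℤ))⁻¹ = pi b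
    rw [zpow_one, inv_inv]; rfl

lemma fg : fQ.comp g0 = MonoidHom.id ZUZ := by
  apply SemidirectProduct.hom_ext
  · apply MonoidHom.ext
    intro v
    simp only [MonoidHom.comp_apply, MonoidHom.id_apply, g0, SemidirectProduct.lift_inl]
    have hfv : f1 v = x ^ (Multiplicative.toAdd v 0) * y ^ (Multiplicative.toAdd v 1) := rfl
    have hx : fQ x = inl (Multiplicative.ofAdd ![1,0]) := F_a
    have hy : fQ y = inl (Multiplicative.ofAdd ![0,1]) := F_y
    have hz1 : (inl (Multiplicative.ofAdd ![(1:ℤ),0]) : ZUZ) ^ (Multiplicative.toAdd v 0)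
        = inl (Multiplicative.ofAdd ((Multiplicative.toAdd v 0) • ![(1:ℤ),0])) := by
      rw [ofAdd_zsmul, map_zpow]
    have hz2 : (inl (Multiplicative.ofAdd ![(0:ℤ),1]) : ZUZ) ^ (Multiplicative.toAdd v 1)
        = inl (Multiplicative.ofAdd ((Multiplicative.toAdd v 1) • ![(0:ℤ),1])) := by
      rw [ofAdd_zsmul, map_zpow]
    rw [hfv, map_mul, map_zpow, map_zpow, hx, hy, hz1, hz2, ← map_mul, ← ofAdd_add]
    congr 1
    rw [show Multiplicative.toAdd v 0 • ![(1:ℤ),0] + Multiplicative.toAdd v 1 • ![(0:ℤ),1]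
        = Multiplicative.toAdd v from ?_]
    · rfl
    · funext i
      fin_cases i <;> simp
  · apply MonoidHom.ext_mint
    simp only [MonoidHom.comp_apply, MonoidHom.id_apply, g0, SemidirectProduct.lift_inr]
    show fQ ((beta⁻¹) ^ (1 : ℤ)) = _
    rw [zpow_one, map_inv]
    have hb : fQ beta = t⁻¹ := F_b
    rw [hb, inv_inv]
    rfl

/-- The quotient of `G = ⟨a, b | a^{b²} = a·a^{3b}⟩` by the normal closure of
`[a, a^b]` is isomorphic to the semidirect product `ℤ² ⋊_U ℤ`,
`U = !![0,1;1,3]`; equivalently, the two-relator group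
`⟨a, b | a^{b²} = a·a^{3b}, [a, a^b] = 1⟩` is isomorphic to `ℤ² ⋊_U ℤ`. -/
theorem quotient_iso_semidirect :
    Nonempty ((G ⧸ Subgroup.normalClosure {cmt a (b⁻¹ * a * b)}) ≃* ZUZ) := by
  exact ⟨{ toFun := fQ, invFun := g0,
           left_inv := fun q => DFunLike.congr_fun gf q,
           right_inv := fun z => DFunLike.congr_fun fg z,
           map_mul' := fQ.map_mul }⟩

end OneRelatorLCS
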